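/- Marginal cost of public funds for unit and ad valorem taxation (Proposition 1). Assume ρ_t ≠ 0, ρ_v ≠ 0, and that ∂R/∂t and ∂R/∂v are nonzero at (t₀, v₀). Then the marginal costs of public funds MC_t := −(∂W/∂t)/(∂R/∂t) and MC_v := −(∂W/∂v)/(∂R/∂v), evaluated at (t₀, v₀), satisfy MC_t = ((1−v)·θ + ε·τ)/(1/ρ_t + v − ε·τ) and MC_v = ((1−v)·θ + ε·τ)/(1/ρ_v + v − ε·τ), where θ, η, ε, τ are evaluated at the equilibrium point q = q*(t₀, v₀), p = P(t₀, v₀), (t, v) = (t₀, v₀). -/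

import Mathlib

/-- **Proposition 1 (Marginal cost of public funds for unit and ad valorem taxation).**
Symmetric oligopoly with unit tax `t` and ad valorem tax `v < 1`, a general conduct
index `θ`, and possibly non-constant marginal cost.  At the equilibrium,
`MC_t = ((1-v)θ + ετ)/(1/ρ_t + v - ετ)` and
`MC_v = ((1-v)θ + ετ)/(1/ρ_v + v - ετ)`. -/
theorem mc_public_funds_unit_and_ad_valorem
    -- inverse industry demand, twice differentiable, positive and decreasing on q > 0
    (p p' p'' : ℝ → ℝ)
    (hp : ∀ q : ℝ, HasDerivAt p (p' q) q)
    (hp' : ∀ q : ℝ, HasDerivAt p' (p'' q) q)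
    (hppos : ∀ q : ℝ, 0 < q → 0 < p q)
    (hpneg : ∀ q : ℝ, 0 < q → p' q < 0)
    -- cost function, twice differentiable, marginal cost mc = c'
    (c mc mc' : ℝ → ℝ)
    (hc : ∀ q : ℝ, HasDerivAt c (mc q) q)
    (hmc : ∀ q : ℝ, HasDerivAt mc (mc' q) q)
    -- conduct index
    (θ : ℝ → ℝ) (hθ : Differentiable ℝ θ)
    -- initial taxes
    (t₀ v₀ : ℝ) (hv₀ : v₀ < 1)
    -- symmetric equilibrium on an open neighborhood of (t₀, v₀)
    (qs : ℝ × ℝ → ℝ) (U : Set (ℝ × ℝ)) (hU : IsOpen U) (hU₀ : (t₀, v₀) ∈ U)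
    (hqs : ContDiffOn ℝ 1 qs U)
    (hqpos : ∀ tv ∈ U, 0 < qs tv)
    (hFOC : ∀ tv ∈ U,
      p (qs tv) - (tv.1 + mc (qs tv)) / (1 - tv.2)
        = θ (qs tv) * (-(qs tv) * p' (qs tv) / p (qs tv)) * p (qs tv))
    -- equilibrium values of quantity, price, elasticities, tax share, conduct
    (q0 p0 η0 ε0 τ0 θ0 : ℝ)
    (hq0 : q0 = qs (t₀, v₀)) (hp0 : p0 = p q0)
    (hη0 : η0 = -q0 * p' q0 / p q0) (hε0 : ε0 = 1 / η0)
    (hτ0 : τ0 = v₀ + t₀ / p0) (hθ0 : θ0 = θ q0)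
    -- pass-through rate and semi-elasticity
    (ρt ρv : ℝ)
    (hρt : ρt = deriv (fun t => p (qs (t, v₀))) t₀)
    (hρv : ρv = (1 / p0) * deriv (fun v => p (qs (t₀, v))) v₀)
    (hρt0 : ρt ≠ 0) (hρv0 : ρv ≠ 0)
    -- per-firm surplus measures
    (CS PS R W : ℝ × ℝ → ℝ)
    (hCS : ∀ tv : ℝ × ℝ, CS tv = (∫ s in (0:ℝ)..(qs tv), p s) - p (qs tv) * qs tv)
    (hPS : ∀ tv : ℝ × ℝ,
      PS tv = (1 - tv.2) * p (qs tv) * qs tv - tv.1 * qs tv - c (qs tv))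
    (hR : ∀ tv : ℝ × ℝ, R tv = tv.1 * qs tv + tv.2 * p (qs tv) * qs tv)
    (hW : ∀ tv : ℝ × ℝ, W tv = CS tv + PS tv + R tv)
    -- nonzero marginal revenue of taxation
    (hRt : deriv (fun t => R (t, v₀)) t₀ ≠ 0)
    (hRv : deriv (fun v => R (t₀, v)) v₀ ≠ 0) :
    -(deriv (fun t => W (t, v₀)) t₀) / deriv (fun t => R (t, v₀)) t₀
        = ((1 - v₀) * θ0 + ε0 * τ0) / (1 / ρt + v₀ - ε0 * τ0)
    ∧ -(deriv (fun v => W (t₀, v)) v₀) / deriv (fun v => R (t₀, v)) v₀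
        = ((1 - v₀) * θ0 + ε0 * τ0) / (1 / ρv + v₀ - ε0 * τ0) := by

  -- basic positivity / nonvanishing facts
  have hq0pos : 0 < q0 := hq0 ▸ hqpos _ hU₀
  have hq0ne : q0 ≠ 0 := ne_of_gt hq0pos
  have hpq0pos : 0 < p q0 := hppos _ hq0pos
  have hpq0ne : p q0 ≠ 0 := ne_of_gt hpq0pos
  have hp0ne : p0 ≠ 0 := by rw [hp0]; exact hpq0ne
  have hp'neg : p' q0 < 0 := hpneg _ hq0pos
  have hp'ne : p' q0 ≠ 0 := ne_of_lt hp'neg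
  have hv1 : (1 : ℝ) - v₀ ≠ 0 := by linarith
  have hη0pos : 0 < η0 := by
    rw [hη0]
    have h1 : 0 < -q0 * p' q0 := by nlinarith
    exact div_pos h1 hpq0pos
  have hη0ne : η0 ≠ 0 := ne_of_gt hη0pos
  have hpcont : Continuous p := by
    rw [continuous_iff_continuousAt]; intro x; exact (hp x).continuousAt
  -- differentiability of qs at the point, partial derivatives
  have hqsdiff : DifferentiableAt ℝ qs (t₀, v₀) :=
    ((hqs.differentiableOn one_ne_zero) (t₀, v₀) hU₀).differentiableAt (hU.mem_nhds hU₀)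
  have hgt : DifferentiableAt ℝ (fun t : ℝ => qs (t, v₀)) t₀ :=
    hqsdiff.comp t₀ (DifferentiableAt.prodMk differentiableAt_id (differentiableAt_const v₀))
  have hgv : DifferentiableAt ℝ (fun v : ℝ => qs (t₀, v)) v₀ :=
    hqsdiff.comp v₀ (DifferentiableAt.prodMk (differentiableAt_const t₀) (differentiableAt_id))
  set qt := deriv (fun t : ℝ => qs (t, v₀)) t₀ with hqt
  set qv := deriv (fun v : ℝ => qs (t₀, v)) v₀ with hqv
  have hGt : HasDerivAt (fun t : ℝ => qs (t, v₀)) qt t₀ := hgt.hasDerivAt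
  have hGv : HasDerivAt (fun v : ℝ => qs (t₀, v)) qv v₀ := hgv.hasDerivAt
  -- price derivatives
  have hPt : HasDerivAt (fun t : ℝ => p (qs (t, v₀))) (p' q0 * qt) t₀ := by
    have h := (hp (qs (t₀, v₀))).comp t₀ hGt
    rw [← hq0] at h
    exact h
  have hPv : HasDerivAt (fun v : ℝ => p (qs (t₀, v))) (p' q0 * qv) v₀ := by
    have h := (hp (qs (t₀, v₀))).comp v₀ hGv
    rw [← hq0] at h
    exact h
  have hρt' : ρt = p' q0 * qt := by rw [hρt, hPt.deriv]
  have hρv' : ρv = (1 / p0) * (p' q0 * qv) := by rw [hρv, hPv.deriv]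
  have hqtne : qt ≠ 0 := by
    intro h; apply hρt0; rw [hρt', h, mul_zero]
  have hqvne : qv ≠ 0 := by
    intro h; apply hρv0; rw [hρv', h, mul_zero, mul_zero]
  -- fundamental theorem of calculus for the consumer-surplus integral
  have hF : ∀ x : ℝ, HasDerivAt (fun y : ℝ => ∫ s in (0:ℝ)..y, p s) (p x) x := by
    intro x
    exact intervalIntegral.integral_hasDerivAt_right (hpcont.intervalIntegrable 0 x)
      (hpcont.stronglyMeasurableAtFilter _ _) hpcont.continuousAt
  -- welfare simplification
  have hWeq : ∀ tv : ℝ × ℝ, W tv = (∫ s in (0:ℝ)..(qs tv), p s) - c (qs tv) := by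
    intro tv; rw [hW, hCS, hPS, hR]; ring
  -- derivatives of welfare
  have hWt : HasDerivAt (fun t : ℝ => W (t, v₀)) ((p q0 - mc q0) * qt) t₀ := by
    have h1 : (fun t : ℝ => W (t, v₀))
        = fun t : ℝ => (∫ s in (0:ℝ)..(qs (t, v₀)), p s) - c (qs (t, v₀)) := by
      funext t; exact hWeq (t, v₀)
    rw [h1]
    have h2 := ((hF (qs (t₀, v₀))).comp t₀ hGt).sub ((hc (qs (t₀, v₀))).comp t₀ hGt)
    rw [← hq0] at h2
    exact h2.congr_deriv (by ring)
  have hWv : HasDerivAt (fun v : ℝ => W (t₀, v)) ((p q0 - mc q0) * qv) v₀ := by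
    have h1 : (fun v : ℝ => W (t₀, v))
        = fun v : ℝ => (∫ s in (0:ℝ)..(qs (t₀, v)), p s) - c (qs (t₀, v)) := by
      funext v; exact hWeq (t₀, v)
    rw [h1]
    have h2 := ((hF (qs (t₀, v₀))).comp v₀ hGv).sub ((hc (qs (t₀, v₀))).comp v₀ hGv)
    rw [← hq0] at h2
    exact h2.congr_deriv (by ring)
  -- derivatives of revenue
  have hRtv : HasDerivAt (fun t : ℝ => R (t, v₀))
      (q0 + t₀ * qt + v₀ * ((p' q0 * qt) * q0 + p q0 * qt)) t₀ := by
    have h1 : (fun t : ℝ => R (t, v₀))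
        = fun t : ℝ => t * qs (t, v₀) + v₀ * p (qs (t, v₀)) * qs (t, v₀) := by
      funext t; exact hR (t, v₀)
    rw [h1]
    have h2 := ((hasDerivAt_id t₀).mul hGt).add
      (((hasDerivAt_const t₀ v₀).mul hPt).mul hGt)
    rw [← hq0] at h2
    simp only [id_eq] at h2
    exact h2.congr_deriv (by simp only [Pi.mul_apply, id_eq]; rw [← hq0]; ring)
  have hRvv : HasDerivAt (fun v : ℝ => R (t₀, v))
      (t₀ * qv + (p q0 * q0 + v₀ * ((p' q0 * qv) * q0 + p q0 * qv))) v₀ := by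
    have h1 : (fun v : ℝ => R (t₀, v))
        = fun v : ℝ => t₀ * qs (t₀, v) + v * p (qs (t₀, v)) * qs (t₀, v) := by
      funext v; exact hR (t₀, v)
    rw [h1]
    have h2 := (((hasDerivAt_const v₀ t₀).mul hGv)).add
      ((((hasDerivAt_id v₀).mul hPv)).mul hGv)
    rw [← hq0] at h2
    simp only [id_eq] at h2
    exact h2.congr_deriv (by simp only [Pi.mul_apply, id_eq]; rw [← hq0]; ring)
  -- first-order condition at the equilibrium
  have hmc0 : mc q0 = (1 - v₀) * (p q0 + θ q0 * (q0 * p' q0)) - t₀ := by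
    have h := hFOC (t₀, v₀) hU₀
    rw [← hq0] at h
    field_simp at h
    nlinarith [h]
  -- the common nonzero factor
  have hAt : q0 * p' q0 * qt ≠ 0 := by
    exact mul_ne_zero (mul_ne_zero hq0ne hp'ne) hqtne
  have hAv : q0 * p' q0 * qv ≠ 0 := by
    exact mul_ne_zero (mul_ne_zero hq0ne hp'ne) hqvne
  -- numerator identity (same for both directions up to qt/qv)
  have hNt : -((p q0 - mc q0) * qt)
      = (q0 * p' q0 * qt) * ((1 - v₀) * θ0 + ε0 * τ0) := by
    rw [hmc0, hε0, hη0, hτ0, hθ0, hp0]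
    field_simp
    ring
  have hNv : -((p q0 - mc q0) * qv)
      = (q0 * p' q0 * qv) * ((1 - v₀) * θ0 + ε0 * τ0) := by
    rw [hmc0, hε0, hη0, hτ0, hθ0, hp0]
    field_simp
    ring
  -- denominator identities
  have hDt : q0 + t₀ * qt + v₀ * ((p' q0 * qt) * q0 + p q0 * qt)
      = (q0 * p' q0 * qt) * (1 / ρt + v₀ - ε0 * τ0) := by
    rw [hρt', hε0, hη0, hτ0, hp0]
    have hptqt : p' q0 * qt ≠ 0 := mul_ne_zero hp'ne hqtne
    field_simp
    ring
  have hDv : t₀ * qv + (p q0 * q0 + v₀ * ((p' q0 * qv) * q0 + p q0 * qv))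
      = (q0 * p' q0 * qv) * (1 / ρv + v₀ - ε0 * τ0) := by
    rw [hρv', hε0, hη0, hτ0, hp0]
    have hpvqv : p' q0 * qv ≠ 0 := mul_ne_zero hp'ne hqvne
    field_simp
    ring
  constructor
  · rw [hWt.deriv, hRtv.deriv, hNt, hDt]
    exact mul_div_mul_left _ _ hAt
  · rw [hWv.deriv, hRvv.deriv, hNv, hDv]
    exact mul_div_mul_left _ _ hAv
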